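/- Let B be a hereditary C*-subalgebra of a unital C*-algebra A with B ≠ A, and let B + ℂ1 denote the unital C*-subalgebra of A spanned by B and the identity. Then every element of (1 + B) ∩ R(A) lies in R(B + ℂ1). -/

import Mathlib

noncomputable section

/-- A closed two-sided ideal of a topological `ℂ`-algebra `A`. -/
structure ClosedIdeal (A : Type*) [NonUnitalNonAssocRing A] [Module ℂ A] [TopologicalSpace A] : Type _ where
  carrier : Submodule ℂ A
  mul_left_mem : ∀ (a x : A), x ∈ carrier → a * x ∈ carrier
  mul_right_mem : ∀ (a x : A), x ∈ carrier → x * a ∈ carrier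
  isClosed : IsClosed (carrier : Set A)

/-- `R(A)`: the set of elements `a` of a unital algebra `A` such that for every closed
two-sided ideal `I`, if the image of `a` in `A/I` is left- or right-invertible, then it is
invertible.  (The image of `a` in `A/I` is left invertible iff `1 - b * a ∈ I` for some `b`,
right invertible iff `1 - a * b ∈ I` for some `b`, and invertible iff both hold for one `b`.) -/
def regSet (A : Type*) [Ring A] [Module ℂ A] [TopologicalSpace A] : Set A :=
  {a | ∀ I : ClosedIdeal A,
    ((∃ b, 1 - b * a ∈ I.carrier) ∨ (∃ b, 1 - a * b ∈ I.carrier)) →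
    ∃ b, 1 - b * a ∈ I.carrier ∧ 1 - a * b ∈ I.carrier}

/-- `B` is a hereditary subalgebra of `A`: whenever `a ∈ A`, `b ∈ B` and `0 ≤ a ≤ b`,
then `a ∈ B`. -/
def IsHereditary {A : Type*} [NonUnitalNonAssocSemiring A] [Module ℂ A] [Star A]
    [PartialOrder A] (B : NonUnitalStarSubalgebra ℂ A) : Prop :=
  ∀ a : A, ∀ b ∈ B, 0 ≤ a → a ≤ b → a ∈ B

/-- The set `B + ℂ1` inside a unital algebra `A`. -/
def plusOneSet {A : Type*} [NonUnitalNonAssocSemiring A] [Module ℂ A] [Star A] [One A]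
    (B : NonUnitalStarSubalgebra ℂ A) : Set A :=
  {x | ∃ b ∈ B, ∃ c : ℂ, x = b + c • (1 : A)}

/-- `B + ℂ1` as a unital subalgebra of `A`. -/
def plusOneAlg {A : Type*} [Ring A] [Algebra ℂ A] [Star A]
    (B : NonUnitalStarSubalgebra ℂ A) : Subalgebra ℂ A where
  carrier := plusOneSet B
  add_mem' := by
    rintro x y ⟨b, hb, c, rfl⟩ ⟨b', hb', c', rfl⟩
    exact ⟨b + b', add_mem hb hb', c + c', by rw [add_smul]; abel⟩
  mul_mem' := by
    rintro x y ⟨b, hb, c, rfl⟩ ⟨b', hb', c', rfl⟩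
    refine ⟨b * b' + c • b' + c' • b,
      add_mem (add_mem (mul_mem hb hb') (SMulMemClass.smul_mem c hb'))
        (SMulMemClass.smul_mem c' hb), c * c', ?_⟩
    simp only [add_mul, mul_add, smul_add, smul_mul_assoc, mul_smul_comm, one_mul, mul_one,
      smul_smul, mul_comm c' c]
    abel
  algebraMap_mem' := fun c => ⟨0, zero_mem _, c, by simp [Algebra.algebraMap_eq_smul_one]⟩


section AuxiliaryLemmas

open Polynomial in
lemma aux_s_bound {s : ℝ} (hs0 : 0 ≤ s) (hs1 : s ≤ 1) {m : ℕ} (hm : 1 ≤ m) :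
    s * (1 - s) ^ m ≤ 1 / m := by
  have hm' : (0:ℝ) < m := by exact_mod_cast hm
  rw [le_div_iff₀ hm']
  have h1 : (1:ℝ) + m * s ≤ (1 + s) ^ m := one_add_mul_le_pow (by linarith) m
  have h2 : (0:ℝ) ≤ (1 - s) ^ m := pow_nonneg (by linarith) m
  have h3 : (1 - s) ^ m * (1 + s) ^ m ≤ 1 := by
    rw [← mul_pow]
    exact pow_le_one₀ (by nlinarith) (by nlinarith)
  nlinarith [mul_le_mul_of_nonneg_left h1 h2]

open Polynomial in
lemma core_approx {A : Type*} [CStarAlgebra A] [PartialOrder A] [StarOrderedRing A]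
    (h : A) (hsa : IsSelfAdjoint h) (hpos : 0 ≤ h) {ε : ℝ} (hε : 0 < ε) :
    ∃ w : A, IsSelfAdjoint w ∧ (∃ p : Polynomial ℝ, 1 - w = h * Polynomial.aeval h p) ∧
      ‖w * h * w‖ < ε := by
  by_cases hh : h = 0
  · refine ⟨1, IsSelfAdjoint.one _, ⟨0, by simp [hh]⟩, by simpa [hh] using hε⟩
  · set c : ℝ := ‖h‖ with hc_def
    have hc : 0 < c := norm_pos_iff.mpr hh
    obtain ⟨n, hn⟩ := exists_nat_gt (c / (2 * ε))
    have hn1 : 1 ≤ n := by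
      by_contra hcon
      push_neg at hcon
      interval_cases n
      · simp at hn; nlinarith [div_pos hc (by linarith : (0:ℝ) < 2*ε)]
    have hcn : c / (2 * n) < ε := by
      have hn0 : (0:ℝ) < n := by exact_mod_cast hn1
      rw [div_lt_iff₀ (by positivity)]
      rw [div_lt_iff₀ (by positivity)] at hn
      nlinarith
    set q : ℝ[X] := (1 - C c⁻¹ * X) ^ n with hq_def
    refine ⟨aeval h q, ?_, ?_, ?_⟩
    · have := cfc_predicate (R := ℝ) (fun x => q.eval x) h
      rwa [cfc_polynomial q h hsa] at this
    · refine ⟨((1 : ℝ[X]) - q).divX, ?_⟩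
      have h0 : ((1:ℝ[X]) - q).coeff 0 = 0 := by
        simp only [coeff_zero_eq_eval_zero, hq_def]
        simp
      have hX : X * ((1:ℝ[X]) - q).divX = (1:ℝ[X]) - q := by
        conv_rhs => rw [← X_mul_divX_add ((1:ℝ[X]) - q)]
        rw [h0, map_zero, add_zero]
      calc 1 - aeval h q = aeval h ((1:ℝ[X]) - q) := by simp
        _ = aeval h (X * ((1:ℝ[X]) - q).divX) := by rw [hX]
        _ = h * aeval h (((1:ℝ[X]) - q).divX) := by rw [map_mul, aeval_X]
    · have key : aeval h q * h * aeval h q = cfc (fun x => (q * X * q).eval x) h := by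
        rw [cfc_polynomial (q * X * q) h hsa]
        rw [map_mul, map_mul, aeval_X]
      rw [show aeval h q * h * aeval h q = cfc (fun x => (q * X * q).eval x) h from key]
      refine norm_cfc_lt hε fun x hx => ?_
      have := nontrivial_of_ne h 0 hh
      have hx0 : 0 ≤ x := spectrum_nonneg_of_nonneg hpos hx
      have hxc : x ≤ c := by
        have := spectrum.norm_le_norm_of_mem hx
        rwa [Real.norm_eq_abs, abs_of_nonneg hx0] at this
      have heval : (q * X * q).eval x = x * ((1 - c⁻¹ * x) ^ n) ^ 2 := by
        simp [hq_def, eval_pow]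
        ring
      rw [heval]
      have hs0 : 0 ≤ c⁻¹ * x := by positivity
      have hs1 : c⁻¹ * x ≤ 1 := by
        rw [inv_mul_le_iff₀ hc]; simpa using hxc
      have hb := aux_s_bound hs0 hs1 (m := 2 * n) (by omega)
      rw [Real.norm_eq_abs, ← pow_mul, abs_of_nonneg (mul_nonneg hx0 (pow_nonneg ?_ _))]
      swap
      · nlinarith [hs1]
      calc x * (1 - c⁻¹ * x) ^ (n * 2) = c * (c⁻¹ * x * (1 - c⁻¹ * x) ^ (2 * n)) := by
            rw [mul_comm n 2]; field_simp
        _ ≤ c * (1 / (2 * n)) := by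
            refine mul_le_mul_of_nonneg_left ?_ hc.le
            simpa using hb
        _ = c / (2 * n) := by ring
        _ < ε := hcn


section Aux2
variable {A : Type*} [CStarAlgebra A] [PartialOrder A] [StarOrderedRing A]

open Polynomial in
lemma approx_left (z : A) {ε : ℝ} (hε : 0 < ε) :
    ∃ v : A, (∃ p : ℝ[X], v = (z * star z) * aeval (z * star z) p) ∧ ‖z - v * z‖ < ε := by
  obtain ⟨w, hwsa, ⟨p, hp⟩, hnorm⟩ := core_approx (z * star z) (IsSelfAdjoint.mul_star_self z)
    (mul_star_self_nonneg z) (mul_pos hε hε)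
  refine ⟨1 - w, ⟨p, by rw [← hp]⟩, ?_⟩
  have hz : z - (1 - w) * z = w * z := by noncomm_ring
  rw [hz]
  have hsq : ‖w * z‖ * ‖w * z‖ = ‖w * (z * star z) * w‖ := by
    rw [← CStarRing.norm_self_mul_star (x := w * z)]
    congr 1
    simp only [star_mul, hwsa.star_eq]
    noncomm_ring
  nlinarith [norm_nonneg (w * z)]

open Polynomial in
lemma approx_right (z : A) {ε : ℝ} (hε : 0 < ε) :
    ∃ u : A, (∃ p : ℝ[X], u = (star z * z) * aeval (star z * z) p) ∧ ‖z - z * u‖ < ε := by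
  obtain ⟨w, hwsa, ⟨p, hp⟩, hnorm⟩ := core_approx (star z * z) (IsSelfAdjoint.star_mul_self z)
    (star_mul_self_nonneg z) (mul_pos hε hε)
  refine ⟨1 - w, ⟨p, by rw [← hp]⟩, ?_⟩
  have hz : z - z * (1 - w) = z * w := by noncomm_ring
  rw [hz]
  have hsq : ‖z * w‖ * ‖z * w‖ = ‖w * (star z * z) * w‖ := by
    rw [← CStarRing.norm_star_mul_self (x := z * w)]
    congr 1
    simp only [star_mul, hwsa.star_eq]
    noncomm_ring
  nlinarith [norm_nonneg (z * w)]

variable (B : NonUnitalStarSubalgebra ℂ A)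

lemma real_smul_mem' {y : A} (hy : y ∈ B) (r : ℝ) : r • y ∈ B := by
  have h1 : r • y = ((r : ℂ)) • y := by
    rw [← smul_one_smul ℂ r y, Complex.real_smul, mul_one]
  rw [h1]; exact SMulMemClass.smul_mem _ hy

lemma pow_mem' {y : A} (hy : y ∈ B) (n : ℕ) : y ^ (n + 1) ∈ B := by
  induction n with
  | zero => simpa using hy
  | succ k ih => rw [pow_succ]; exact mul_mem ih hy

open Polynomial in
lemma mul_aeval_mem {h : A} (hh : h ∈ B) (p : ℝ[X]) : h * aeval h p ∈ B := by
  induction p using Polynomial.induction_on' with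
  | add p q hp hq => rw [map_add, mul_add]; exact add_mem hp hq
  | monomial n r =>
      rw [aeval_monomial]
      have he : h * (algebraMap ℝ A r * h ^ n) = r • h ^ (n + 1) := by
        rw [Algebra.smul_def, ← mul_assoc, ← Algebra.commutes r h, mul_assoc, pow_succ']
      rw [he]
      exact real_smul_mem' B (pow_mem' B hh n) r


variable (hBher : IsHereditary B)

lemma conj_mem_sa (hBher : IsHereditary B) {d : A} (hd : d ∈ B) {a : A}
    (ha : IsSelfAdjoint a) : star d * a * d ∈ B := by
  set m : A := algebraMap ℝ A ‖a‖ - a with hm_def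
  have hm0 : 0 ≤ m := sub_nonneg.mpr ha.le_algebraMap_norm_self
  have hm2 : m ≤ algebraMap ℝ A (2 * ‖a‖) := by
    have hneg : -(algebraMap ℝ A ‖a‖) ≤ a := ha.neg_algebraMap_norm_le_self
    have h2 : algebraMap ℝ A (2 * ‖a‖) = algebraMap ℝ A ‖a‖ + algebraMap ℝ A ‖a‖ := by
      rw [← map_add]; congr 1; ring
    rw [h2, hm_def]
    calc algebraMap ℝ A ‖a‖ - a ≤ algebraMap ℝ A ‖a‖ - -(algebraMap ℝ A ‖a‖) :=
          sub_le_sub_left hneg _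
      _ = algebraMap ℝ A ‖a‖ + algebraMap ℝ A ‖a‖ := by abel
  have hconj0 : 0 ≤ star d * m * d := star_left_conjugate_nonneg hm0 d
  have hconj2 : star d * m * d ≤ star d * algebraMap ℝ A (2 * ‖a‖) * d :=
    star_left_conjugate_le_conjugate hm2 d
  have heq : star d * algebraMap ℝ A (2 * ‖a‖) * d = (2 * ‖a‖) • (star d * d) := by
    rw [Algebra.smul_def, ← Algebra.commutes (2 * ‖a‖) (star d), mul_assoc]
  have hmem2 : star d * algebraMap ℝ A (2 * ‖a‖) * d ∈ B := by
    rw [heq]; exact real_smul_mem' B (mul_mem (star_mem hd) hd) _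
  have hmem : star d * m * d ∈ B := hBher _ _ hmem2 hconj0 hconj2
  have hfin : star d * a * d = ‖a‖ • (star d * d) - star d * m * d := by
    have hcomm : star d * (algebraMap ℝ A ‖a‖) * d = (algebraMap ℝ A ‖a‖) * (star d * d) := by
      rw [← Algebra.commutes ‖a‖ (star d), mul_assoc]
    rw [hm_def, Algebra.smul_def, mul_sub, sub_mul, hcomm]
    abel
  rw [hfin]
  exact sub_mem (real_smul_mem' B (mul_mem (star_mem hd) hd) _) hmem


lemma conj_mem (hBher : IsHereditary B) {d : A} (hd : d ∈ B) (a : A) :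
    star d * a * d ∈ B := by
  set a₁ : A := (2⁻¹ : ℂ) • (a + star a) with ha1
  set a₂ : A := ((2⁻¹ : ℂ) * (-Complex.I)) • (a - star a) with ha2
  have hsa1 : IsSelfAdjoint a₁ := by
    rw [ha1, IsSelfAdjoint, star_smul, star_add, star_star]
    simp [add_comm]
  have hsa2 : IsSelfAdjoint a₂ := by
    rw [ha2, IsSelfAdjoint, star_smul, star_sub, star_star]
    have hc : star ((2⁻¹ : ℂ) * (-Complex.I)) = -((2⁻¹ : ℂ) * (-Complex.I)) := by
      simp
    rw [hc, neg_smul, ← smul_neg, neg_sub]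
  have hdecomp : a = a₁ + Complex.I • a₂ := by
    rw [ha1, ha2, smul_smul]
    have : Complex.I * ((2⁻¹ : ℂ) * (-Complex.I)) = (2⁻¹ : ℂ) := by
      linear_combination (-2⁻¹ : ℂ) * Complex.I_sq
    rw [this]
    module
  have key : star d * a * d = star d * a₁ * d + Complex.I • (star d * a₂ * d) := by
    rw [hdecomp]
    simp only [mul_add, add_mul, mul_smul_comm, smul_mul_assoc]
  rw [key]
  exact add_mem (conj_mem_sa B hBher hd hsa1)
    (SMulMemClass.smul_mem _ (conj_mem_sa B hBher hd hsa2))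

lemma BAB (hBher : IsHereditary B) {b₁ b₂ : A} (h1 : b₁ ∈ B) (h2 : b₂ ∈ B) (x : A) :
    b₁ * x * b₂ ∈ B := by
  set u : A := star b₁ with hu
  have hu' : u ∈ B := star_mem h1
  have expand : ∀ c : ℂ, star (b₂ + c • u) * x * (b₂ + c • u) =
      star b₂ * x * b₂ + c • (star b₂ * x * u) + (star c) • (b₁ * x * b₂) +
        ((star c) * c) • (b₁ * x * u) := by
    intro c
    simp only [star_add, star_smul, hu, star_star, add_mul, mul_add, smul_mul_assoc,
      mul_smul_comm, smul_add, smul_smul]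
    module
  have E : ∀ c : ℂ, star (b₂ + c • u) * x * (b₂ + c • u) ∈ B := fun c =>
    conj_mem B hBher (add_mem h2 (SMulMemClass.smul_mem c hu')) x
  have key : b₁ * x * b₂ = (4⁻¹ : ℂ) •
      ((star (b₂ + (1:ℂ) • u) * x * (b₂ + (1:ℂ) • u))
        + Complex.I • (star (b₂ + Complex.I • u) * x * (b₂ + Complex.I • u))
        - (star (b₂ + (-1:ℂ) • u) * x * (b₂ + (-1:ℂ) • u))
        - Complex.I • (star (b₂ + (-Complex.I) • u) * x * (b₂ + (-Complex.I) • u))) := by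
    rw [expand 1, expand Complex.I, expand (-1), expand (-Complex.I)]
    match_scalars <;> simp [Complex.ext_iff] <;> norm_num
  rw [key]
  refine SMulMemClass.smul_mem _ (sub_mem (sub_mem (add_mem (E 1)
    (SMulMemClass.smul_mem _ (E Complex.I))) (E (-1))) (SMulMemClass.smul_mem _ (E (-Complex.I))))



variable (K : Submodule ℂ A)
  (hKB : ∀ k ∈ K, k ∈ B)
  (hKl : ∀ b' ∈ B, ∀ k ∈ K, b' * k ∈ K)
  (hKr : ∀ k ∈ K, ∀ b' ∈ B, k * b' ∈ K)
  (hKc : IsClosed (K : Set A))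

include hBher hKB hKl hKc in
lemma H1 : ∀ e ∈ B, ∀ (x : A), ∀ k ∈ K, e * x * k ∈ K := by
  intro e he x k hk
  have : e * x * k ∈ closure (K : Set A) := by
    rw [Metric.mem_closure_iff]
    intro ε hε
    have hpos : 0 < ε / (‖e * x‖ + 1) := by positivity
    obtain ⟨v, ⟨p, hp⟩, hv⟩ := approx_left k hpos
    have hvB : v ∈ B := by
      rw [hp]; exact mul_aeval_mem B (mul_mem (hKB k hk) (star_mem (hKB k hk))) p
    refine ⟨(e * x * v) * k, hKl _ (BAB B hBher he hvB x) _ hk, ?_⟩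
    rw [dist_eq_norm]
    have heq : e * x * k - e * x * v * k = (e * x) * (k - v * k) := by noncomm_ring
    rw [heq]
    calc ‖(e * x) * (k - v * k)‖ ≤ ‖e * x‖ * ‖k - v * k‖ := norm_mul_le _ _
      _ ≤ ‖e * x‖ * (ε / (‖e * x‖ + 1)) := by
          exact mul_le_mul_of_nonneg_left hv.le (norm_nonneg _)
      _ < ε := by
          rw [mul_div_assoc']
          rw [div_lt_iff₀ (by positivity)]
          nlinarith [norm_nonneg (e * x)]
  rwa [hKc.closure_eq] at this

include hBher hKB hKr hKc in
lemma H2 : ∀ k ∈ K, ∀ (x : A), ∀ e ∈ B, k * x * e ∈ K := by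
  intro k hk x e he
  have : k * x * e ∈ closure (K : Set A) := by
    rw [Metric.mem_closure_iff]
    intro ε hε
    have hpos : 0 < ε / (‖x * e‖ + 1) := by positivity
    obtain ⟨u, ⟨p, hp⟩, hu⟩ := approx_right k hpos
    have huB : u ∈ B := by
      rw [hp]; exact mul_aeval_mem B (mul_mem (star_mem (hKB k hk)) (hKB k hk)) p
    refine ⟨k * (u * x * e), hKr _ hk _ (BAB B hBher huB he x), ?_⟩
    rw [dist_eq_norm]
    have heq : k * x * e - k * (u * x * e) = (k - k * u) * (x * e) := by noncomm_ring
    rw [heq]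
    calc ‖(k - k * u) * (x * e)‖ ≤ ‖k - k * u‖ * ‖x * e‖ := norm_mul_le _ _
      _ ≤ (ε / (‖x * e‖ + 1)) * ‖x * e‖ := by
          exact mul_le_mul_of_nonneg_right hu.le (norm_nonneg _)
      _ < ε := by
          rw [div_mul_eq_mul_div, div_lt_iff₀ (by positivity)]
          nlinarith [norm_nonneg (x * e)]
  rwa [hKc.closure_eq] at this

def idealSpan : Submodule ℂ A :=
  Submodule.span ℂ {w : A | ∃ x y : A, ∃ k ∈ K, w = x * k * y}

include hBher hKB hKl hKr hKc in
lemma H3 : ∀ e₁ ∈ B, ∀ e₂ ∈ B, ∀ g ∈ (idealSpan K).topologicalClosure,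
    e₁ * g * e₂ ∈ K := by
  intro e₁ he₁ e₂ he₂ g hg
  have hspan : ∀ w ∈ idealSpan K, e₁ * w * e₂ ∈ K := by
    intro w hw
    induction hw using Submodule.span_induction with
    | mem w hw =>
        obtain ⟨x, y, k, hk, rfl⟩ := hw
        have h1 : e₁ * x * k ∈ K := H1 B hBher K hKB hKl hKc e₁ he₁ x k hk
        have heq : e₁ * (x * k * y) * e₂ = (e₁ * x * k) * y * e₂ := by noncomm_ring
        rw [heq]
        exact H2 B hBher K hKB hKr hKc _ h1 y e₂ he₂
    | zero => simpa using K.zero_mem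
    | add w₁ w₂ _ _ ih₁ ih₂ =>
        have : e₁ * (w₁ + w₂) * e₂ = e₁ * w₁ * e₂ + e₁ * w₂ * e₂ := by noncomm_ring
        rw [this]; exact K.add_mem ih₁ ih₂
    | smul c w _ ih =>
        have : e₁ * (c • w) * e₂ = c • (e₁ * w * e₂) := by
          rw [mul_smul_comm, smul_mul_assoc]
        rw [this]; exact K.smul_mem c ih
  have hcont : Continuous (fun w : A => e₁ * w * e₂) :=
    (continuous_mul_right e₂).comp (continuous_mul_left e₁)
  have hg' : g ∈ closure ((idealSpan K : Set A)) := by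
    exact hg
  have := map_mem_closure hcont hg' (fun w hw => hspan w hw)
  rwa [hKc.closure_eq] at this

include hBher hKB hKl hKr hKc in
lemma H4 {z : A} (hzB : z ∈ B) (hzI : z ∈ (idealSpan K).topologicalClosure) : z ∈ K := by
  have : z ∈ closure (K : Set A) := by
    rw [Metric.mem_closure_iff]
    intro ε hε
    obtain ⟨v, ⟨p, hp⟩, hv⟩ := approx_left z (half_pos hε)
    have hvB : v ∈ B := by
      rw [hp]; exact mul_aeval_mem B (mul_mem hzB (star_mem hzB)) p
    have hpos : 0 < ε / (2 * (‖v‖ + 1)) := by positivity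
    obtain ⟨u, ⟨q, hq⟩, hu⟩ := approx_right z hpos
    refine ⟨v * z * u, H3 B hBher K hKB hKl hKr hKc v hvB u
      (by rw [hq]; exact mul_aeval_mem B (mul_mem (star_mem hzB) hzB) q) z hzI, ?_⟩
    rw [dist_eq_norm]
    have heq : z - v * z * u = (z - v * z) + v * (z - z * u) := by noncomm_ring
    rw [heq]
    calc ‖(z - v * z) + v * (z - z * u)‖ ≤ ‖z - v * z‖ + ‖v * (z - z * u)‖ := norm_add_le _ _
      _ ≤ ‖z - v * z‖ + ‖v‖ * ‖z - z * u‖ := by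
          exact add_le_add_right (norm_mul_le _ _) _
      _ < ε / 2 + ‖v‖ * (ε / (2 * (‖v‖ + 1))) := by
          refine add_lt_add_of_lt_of_le hv ?_
          exact mul_le_mul_of_nonneg_left hu.le (norm_nonneg _)
      _ ≤ ε / 2 + ε / 2 := by
          refine add_le_add_right ?_ _
          rw [mul_div_assoc', div_le_div_iff₀ (by positivity) (by norm_num)]
          nlinarith [norm_nonneg v]
      _ = ε := by ring
  rwa [hKc.closure_eq] at this

end Aux2
end AuxiliaryLemmas

/-- If `B` is a hereditary C*-subalgebra of the unital C*-algebra `A` with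
`B ≠ A`, then every element of `(1 + B) ∩ R(A)` lies in `R(B + ℂ1)`. -/
theorem mem_regSet_plusOne {A : Type*} [CStarAlgebra A] [PartialOrder A] [StarOrderedRing A]
    (B : NonUnitalStarSubalgebra ℂ A) (hBclosed : IsClosed (B : Set A))
    (hBher : IsHereditary B) (hBproper : (B : Set A) ≠ Set.univ)
    (b : A) (hb : b ∈ B) (hreg : (1 + b) ∈ regSet A) :
    (⟨1 + b, show (1 + b) ∈ plusOneSet B from ⟨b, hb, 1, by rw [one_smul, add_comm]⟩⟩ :
      plusOneAlg B) ∈ regSet ↥(plusOneAlg B) := by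
  set M : Subalgebra ℂ A := plusOneAlg B with hM
  set ah : ↥M := ⟨1 + b, ⟨b, hb, 1, by rw [one_smul, add_comm]⟩⟩ with hah
  intro J hJ
  -- the image of J inside A
  set Jsub : Submodule ℂ A := J.carrier.map M.val.toLinearMap with hJsub
  have mem_Jsub : ∀ z : A, z ∈ Jsub ↔ ∃ j ∈ J.carrier, (j : A) = z := by
    intro z
    simp [hJsub, Submodule.mem_map]
    exact Iff.rfl
  have memM : ∀ z ∈ B, z ∈ M := fun z hz => ⟨z, hz, 0, by simp⟩
  have hJl : ∀ m ∈ M, ∀ z ∈ Jsub, m * z ∈ Jsub := by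
    intro m hm z hz
    obtain ⟨j, hj, rfl⟩ := (mem_Jsub z).mp hz
    exact (mem_Jsub _).mpr ⟨⟨m, hm⟩ * j, J.mul_left_mem ⟨m, hm⟩ j hj, rfl⟩
  have hJr : ∀ z ∈ Jsub, ∀ m ∈ M, z * m ∈ Jsub := by
    intro z hz m hm
    obtain ⟨j, hj, rfl⟩ := (mem_Jsub z).mp hz
    exact (mem_Jsub _).mpr ⟨j * ⟨m, hm⟩, J.mul_right_mem ⟨m, hm⟩ j hj, rfl⟩
  have lift_mem : ∀ u : ↥M, (u : A) ∈ Jsub → u ∈ J.carrier := by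
    intro u hu
    obtain ⟨j, hj, hval⟩ := (mem_Jsub _).mp hu
    rwa [show j = u from Subtype.ext hval] at hj
  -- K = B ∩ Jsub
  set K : Submodule ℂ A := Jsub ⊓ B.toNonUnitalSubalgebra.toSubmodule with hK
  have mem_K : ∀ z : A, z ∈ K ↔ z ∈ Jsub ∧ z ∈ B := fun z => Submodule.mem_inf
  have hKB : ∀ k ∈ K, k ∈ B := fun k hk => ((mem_K k).mp hk).2
  have hKl : ∀ b' ∈ B, ∀ k ∈ K, b' * k ∈ K := by
    intro b' hb' k hk
    obtain ⟨h1, h2⟩ := (mem_K k).mp hk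
    exact (mem_K _).mpr ⟨hJl b' (memM b' hb') k h1, mul_mem hb' h2⟩
  have hKr : ∀ k ∈ K, ∀ b' ∈ B, k * b' ∈ K := by
    intro k hk b' hb'
    obtain ⟨h1, h2⟩ := (mem_K k).mp hk
    exact (mem_K _).mpr ⟨hJr k h1 b' (memM b' hb'), mul_mem h2 hb'⟩
  have hKc : IsClosed (K : Set A) := by
    obtain ⟨C, hC, hpre⟩ := isClosed_induced_iff.mp J.isClosed
    have hset : (K : Set A) = (B : Set A) ∩ C := by
      ext z
      constructor
      · rintro hz
        obtain ⟨h1, h2⟩ := (mem_K z).mp hz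
        refine ⟨h2, ?_⟩
        obtain ⟨j, hj, rfl⟩ := (mem_Jsub _).mp h1
        have : j ∈ Subtype.val ⁻¹' C := by rw [hpre]; exact hj
        exact this
      · rintro ⟨h1, h2⟩
        refine (mem_K z).mpr ⟨?_, h1⟩
        have hmem : z ∈ M := memM z h1
        have : (⟨z, hmem⟩ : ↥M) ∈ Subtype.val ⁻¹' C := h2
        rw [hpre] at this
        exact (mem_Jsub z).mpr ⟨⟨z, hmem⟩, this, rfl⟩
    rw [hset]
    exact hBclosed.inter hC
  -- the closed ideal of A generated by K
  have hIl : ∀ (a' w : A), w ∈ (idealSpan K).topologicalClosure →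
      a' * w ∈ (idealSpan K).topologicalClosure := by
    intro a' w hw
    have hsp : ∀ v ∈ idealSpan K, a' * v ∈ idealSpan K := by
      intro v hv
      induction hv using Submodule.span_induction with
      | mem v hv =>
          obtain ⟨x, y, k, hk, rfl⟩ := hv
          exact Submodule.subset_span ⟨a' * x, y, k, hk, by noncomm_ring⟩
      | zero => rw [mul_zero]; exact Submodule.zero_mem _
      | add v₁ v₂ _ _ ih₁ ih₂ => rw [mul_add]; exact Submodule.add_mem _ ih₁ ih₂
      | smul c v _ ih => rw [mul_smul_comm]; exact Submodule.smul_mem _ c ih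
    exact map_mem_closure (continuous_mul_left a') hw fun v hv => hsp v hv
  have hIr : ∀ (a' w : A), w ∈ (idealSpan K).topologicalClosure →
      w * a' ∈ (idealSpan K).topologicalClosure := by
    intro a' w hw
    have hsp : ∀ v ∈ idealSpan K, v * a' ∈ idealSpan K := by
      intro v hv
      induction hv using Submodule.span_induction with
      | mem v hv =>
          obtain ⟨x, y, k, hk, rfl⟩ := hv
          exact Submodule.subset_span ⟨x, y * a', k, hk, by noncomm_ring⟩
      | zero => rw [zero_mul]; exact Submodule.zero_mem _
      | add v₁ v₂ _ _ ih₁ ih₂ => rw [add_mul]; exact Submodule.add_mem _ ih₁ ih₂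
      | smul c v _ ih => rw [smul_mul_assoc]; exact Submodule.smul_mem _ c ih
    have := map_mem_closure (f := (· * a')) (continuous_mul_right a') hw
      (fun v hv => hsp v hv)
    exact this
  set I : ClosedIdeal A :=
    { carrier := (idealSpan K).topologicalClosure
      mul_left_mem := hIl
      mul_right_mem := fun a' x hx => hIr a' x hx
      isClosed := Submodule.isClosed_topologicalClosure _ } with hI
  have hKI : ∀ k ∈ K, k ∈ I.carrier := by
    intro k hk
    exact Submodule.le_topologicalClosure _ (Submodule.subset_span ⟨1, 1, k, hk, by simp⟩)
  -- key step: from the hypothesis, produce a one-sided inverse mod I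
  have key : (∃ x'' : A, 1 - x'' * (1 + b) ∈ I.carrier) ∨
      (∃ x'' : A, 1 - (1 + b) * x'' ∈ I.carrier) := by
    have ahM : (1 + b : A) ∈ M := ah.2
    rcases hJ with ⟨xh, hx⟩ | ⟨xh, hx⟩
    · -- left invertible mod J
      have hxA : 1 - (xh : A) * (1 + b) ∈ Jsub :=
        (mem_Jsub _).mpr ⟨1 - xh * ah, hx, by push_cast; rfl⟩
      obtain ⟨xB, hxB, cx, hxdec⟩ := xh.2
      by_cases hc : cx = 1
      · refine Or.inl ⟨(xh : A), hKI _ ((mem_K _).mpr ⟨hxA, ?_⟩)⟩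
        have hid : 1 - (xh : A) * (1 + b) = -(xB + xB * b + b) := by
          rw [hxdec, hc, one_smul]; noncomm_ring
        rw [hid]
        exact neg_mem (add_mem (add_mem hxB (mul_mem hxB hb)) hb)
      · have hs : (1 : ℂ) - cx ≠ 0 := sub_ne_zero.mpr (Ne.symm hc)
        have he0B : xB + xB * b + cx • b ∈ B :=
          add_mem (add_mem hxB (mul_mem hxB hb)) (SMulMemClass.smul_mem cx hb)
        have hj : 1 - (xh : A) * (1 + b) = ((1 : ℂ) - cx) • (1 : A) - (xB + xB * b + cx • b) := by
          rw [hxdec]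
          simp only [add_mul, smul_mul_assoc, mul_add, mul_one, one_mul, sub_smul, one_smul, smul_add]
          abel
        set b₀ : A := ((1 : ℂ) - cx)⁻¹ • (xB + xB * b + cx • b) with hb₀
        have hb₀B : b₀ ∈ B := SMulMemClass.smul_mem _ he0B
        have hj₁ : (1 : A) - b₀ ∈ Jsub := by
          have : (1 : A) - b₀ = ((1 : ℂ) - cx)⁻¹ • (1 - (xh : A) * (1 + b)) := by
            rw [hj, smul_sub, smul_smul, inv_mul_cancel₀ hs, one_smul, hb₀]
          rw [this]
          exact Jsub.smul_mem _ hxA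
        have heBl : ∀ b' ∈ B, b₀ * b' - b' ∈ K := by
          intro b' hb'
          refine (mem_K _).mpr ⟨?_, sub_mem (mul_mem hb₀B hb') hb'⟩
          have hid : b₀ * b' - b' = -(((1 : A) - b₀) * b') := by noncomm_ring
          rw [hid]
          exact Jsub.neg_mem (hJr _ hj₁ b' (memM b' hb'))
        have heBr : ∀ b' ∈ B, b' * b₀ - b' ∈ K := by
          intro b' hb'
          refine (mem_K _).mpr ⟨?_, sub_mem (mul_mem hb' hb₀B) hb'⟩
          have hid : b' * b₀ - b' = -(b' * ((1 : A) - b₀)) := by noncomm_ring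
          rw [hid]
          exact Jsub.neg_mem (hJl b' (memM b' hb') _ hj₁)
        set x' : A := xB + cx • b₀ with hx'
        have hx'B : x' ∈ B := add_mem hxB (SMulMemClass.smul_mem cx hb₀B)
        have hx'x : x' - (xh : A) = -(cx • ((1 : A) - b₀)) := by
          rw [hx', hxdec, smul_sub]; abel
        have hk₀ : x' * (b + b₀) - b₀ ∈ K := by
          refine (mem_K _).mpr ⟨?_, sub_mem (mul_mem hx'B (add_mem hb hb₀B)) hb₀B⟩
          have hid : x' * (b + b₀) - b₀ = x' * (-((1:A) - b₀)) + (x' - (xh : A)) * (1 + b)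
              + (-(1 - (xh : A) * (1 + b))) + ((1 : A) - b₀) := by noncomm_ring
          rw [hid, hx'x]
          refine Jsub.add_mem (Jsub.add_mem (Jsub.add_mem ?_ ?_) (Jsub.neg_mem hxA)) hj₁
          · rw [mul_neg]
            exact Jsub.neg_mem (hJl x' (memM x' hx'B) _ hj₁)
          · rw [neg_mul]
            exact Jsub.neg_mem (hJr _ (Jsub.smul_mem cx hj₁) _ ahM)
        refine Or.inl ⟨x' + 1 - b₀, ?_⟩
        have hid : 1 - (x' + 1 - b₀) * (1 + b) =
            -(x' * (b + b₀) - b₀) + (x' * b₀ - x') + (b₀ * b - b) := by noncomm_ring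
        rw [hid]
        exact Submodule.add_mem _ (Submodule.add_mem _ (Submodule.neg_mem _ (hKI _ hk₀))
          (hKI _ (heBr x' hx'B))) (hKI _ (heBl b hb))
    · -- right invertible mod J
      have hxA : 1 - (1 + b) * (xh : A) ∈ Jsub :=
        (mem_Jsub _).mpr ⟨1 - ah * xh, hx, by push_cast; rfl⟩
      obtain ⟨xB, hxB, cx, hxdec⟩ := xh.2
      by_cases hc : cx = 1
      · refine Or.inr ⟨(xh : A), hKI _ ((mem_K _).mpr ⟨hxA, ?_⟩)⟩
        have hid : 1 - (1 + b) * (xh : A) = -(xB + b * xB + b) := by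
          rw [hxdec, hc, one_smul]; noncomm_ring
        rw [hid]
        exact neg_mem (add_mem (add_mem hxB (mul_mem hb hxB)) hb)
      · have hs : (1 : ℂ) - cx ≠ 0 := sub_ne_zero.mpr (Ne.symm hc)
        have he0B : xB + b * xB + cx • b ∈ B :=
          add_mem (add_mem hxB (mul_mem hb hxB)) (SMulMemClass.smul_mem cx hb)
        have hj : 1 - (1 + b) * (xh : A) = ((1 : ℂ) - cx) • (1 : A) - (xB + b * xB + cx • b) := by
          rw [hxdec]
          simp only [add_mul, mul_smul_comm, mul_add, mul_one, one_mul, sub_smul, one_smul, smul_add]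
          abel
        set b₀ : A := ((1 : ℂ) - cx)⁻¹ • (xB + b * xB + cx • b) with hb₀
        have hb₀B : b₀ ∈ B := SMulMemClass.smul_mem _ he0B
        have hj₁ : (1 : A) - b₀ ∈ Jsub := by
          have : (1 : A) - b₀ = ((1 : ℂ) - cx)⁻¹ • (1 - (1 + b) * (xh : A)) := by
            rw [hj, smul_sub, smul_smul, inv_mul_cancel₀ hs, one_smul, hb₀]
          rw [this]
          exact Jsub.smul_mem _ hxA
        have heBl : ∀ b' ∈ B, b₀ * b' - b' ∈ K := by
          intro b' hb'
          refine (mem_K _).mpr ⟨?_, sub_mem (mul_mem hb₀B hb') hb'⟩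
          have hid : b₀ * b' - b' = -(((1 : A) - b₀) * b') := by noncomm_ring
          rw [hid]
          exact Jsub.neg_mem (hJr _ hj₁ b' (memM b' hb'))
        have heBr : ∀ b' ∈ B, b' * b₀ - b' ∈ K := by
          intro b' hb'
          refine (mem_K _).mpr ⟨?_, sub_mem (mul_mem hb' hb₀B) hb'⟩
          have hid : b' * b₀ - b' = -(b' * ((1 : A) - b₀)) := by noncomm_ring
          rw [hid]
          exact Jsub.neg_mem (hJl b' (memM b' hb') _ hj₁)
        set x' : A := xB + cx • b₀ with hx'
        have hx'B : x' ∈ B := add_mem hxB (SMulMemClass.smul_mem cx hb₀B)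
        have hx'x : x' - (xh : A) = -(cx • ((1 : A) - b₀)) := by
          rw [hx', hxdec, smul_sub]; abel
        have hk₀ : (b + b₀) * x' - b₀ ∈ K := by
          refine (mem_K _).mpr ⟨?_, sub_mem (mul_mem (add_mem hb hb₀B) hx'B) hb₀B⟩
          have hid : (b + b₀) * x' - b₀ = (-((1:A) - b₀)) * x' + (1 + b) * (x' - (xh : A))
              + (-(1 - (1 + b) * (xh : A))) + ((1 : A) - b₀) := by noncomm_ring
          rw [hid, hx'x]
          refine Jsub.add_mem (Jsub.add_mem (Jsub.add_mem ?_ ?_) (Jsub.neg_mem hxA)) hj₁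
          · rw [neg_mul]
            exact Jsub.neg_mem (hJr _ hj₁ x' (memM x' hx'B))
          · rw [mul_neg]
            exact Jsub.neg_mem (hJl _ ahM _ (Jsub.smul_mem cx hj₁))
        refine Or.inr ⟨x' + 1 - b₀, ?_⟩
        have hid : 1 - (1 + b) * (x' + 1 - b₀) =
            -((b + b₀) * x' - b₀) + (b₀ * x' - x') + (b * b₀ - b) := by noncomm_ring
        rw [hid]
        exact Submodule.add_mem _ (Submodule.add_mem _ (Submodule.neg_mem _ (hKI _ hk₀))
          (hKI _ (heBl x' hx'B))) (hKI _ (heBr b hb))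
  obtain ⟨y, hy1, hy2⟩ := hreg I key
  -- build the inverse inside M
  set d : A := -b + b * y * b with hd
  have hdB : d ∈ B := add_mem (neg_mem hb) (BAB B hBher hb hb y)
  set y' : A := 1 + d with hy'
  have hyy : y' - y ∈ I.carrier := by
    have hid : y' - y = -(b * (1 - y * (1 + b))) + (1 - (1 + b) * y) := by
      rw [hy', hd]; noncomm_ring
    rw [hid]
    exact Submodule.add_mem _ (Submodule.neg_mem _ (I.mul_left_mem b _ hy1)) hy2
  have hy'1 : 1 - y' * (1 + b) ∈ I.carrier := by
    have hid : 1 - y' * (1 + b) = (1 - y * (1 + b)) - (y' - y) * (1 + b) := by noncomm_ring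
    rw [hid]
    exact Submodule.sub_mem _ hy1 (I.mul_right_mem (1 + b) _ hyy)
  have hy'2 : 1 - (1 + b) * y' ∈ I.carrier := by
    have hid : 1 - (1 + b) * y' = (1 - (1 + b) * y) - (1 + b) * (y' - y) := by noncomm_ring
    rw [hid]
    exact Submodule.sub_mem _ hy2 (I.mul_left_mem (1 + b) _ hyy)
  have hB1 : 1 - y' * (1 + b) ∈ B := by
    have hid : 1 - y' * (1 + b) = -(b + d + d * b) := by rw [hy']; noncomm_ring
    rw [hid]
    exact neg_mem (add_mem (add_mem hb hdB) (mul_mem hdB hb))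
  have hB2 : 1 - (1 + b) * y' ∈ B := by
    have hid : 1 - (1 + b) * y' = -(b + d + b * d) := by rw [hy']; noncomm_ring
    rw [hid]
    exact neg_mem (add_mem (add_mem hb hdB) (mul_mem hb hdB))
  have hK1 : 1 - y' * (1 + b) ∈ K := H4 B hBher K hKB hKl hKr hKc hB1 hy'1
  have hK2 : 1 - (1 + b) * y' ∈ K := H4 B hBher K hKB hKl hKr hKc hB2 hy'2
  have hy'M : y' ∈ M := ⟨d, hdB, 1, by rw [one_smul, hy']; abel⟩
  refine ⟨⟨y', hy'M⟩, lift_mem _ ?_, lift_mem _ ?_⟩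
  · have : ((1 - (⟨y', hy'M⟩ : ↥M) * ah : ↥M) : A) = 1 - y' * (1 + b) := by push_cast; rfl
    rw [this]
    exact ((mem_K _).mp hK1).1
  · have : ((1 - ah * (⟨y', hy'M⟩ : ↥M) : ↥M) : A) = 1 - (1 + b) * y' := by push_cast; rfl
    rw [this]
    exact ((mem_K _).mp hK2).1
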